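/- Let X be a perfect Polish space and 1 < α < ω₁. Then there exists a Σ⁰_α subset A of X such that for every nonempty open set U ⊆ X, the set A ∩ U is Σ⁰_α but not Π⁰_α in X. -/

import Mathlib

open Ordinal

/-- The Borel pointclasses `Σ⁰_α(X)` for an arbitrary topological space `X`. -/
inductive SigmaLev {X : Type*} [TopologicalSpace X] : Ordinal.{0} → Set X → Prop
  | open_ {U : Set X} (h : IsOpen U) : SigmaLev 1 U
  | diff (f g : ℕ → Set X) (hf : ∀ n, IsOpen (f n)) (hg : ∀ n, IsOpen (g n)) :
      SigmaLev 2 (⋃ n, f n \ g n)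
  | union {α : Ordinal} (hα : 2 < α) (β : ℕ → Ordinal) (hβ : ∀ n, β n < α)
      (A : ℕ → Set X) (h : ∀ n, SigmaLev (β n) (A n)ᶜ) : SigmaLev α (⋃ n, A n)

open Set Function

section Basic
variable {X : Type*} [TopologicalSpace X] {S T V : Set X} {β γ : Ordinal}

lemma ord_one_lt_two : (1 : Ordinal) < 2 := by
  rw [← one_add_one_eq_two, Ordinal.add_one_eq_succ]
  exact Order.lt_succ 1

lemma ord_le_one_of_lt_two (h : γ < 2) : γ ≤ 1 := by
  rwa [← one_add_one_eq_two, Ordinal.add_one_eq_succ, Order.lt_succ_iff] at h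

lemma sl_one_le (h : SigmaLev β S) : 1 ≤ β := by
  cases h with
  | open_ h => exact le_rfl
  | diff => exact ord_one_lt_two.le
  | union hα => exact (ord_one_lt_two.trans hα).le

lemma sl_of_isOpen_one (h : SigmaLev β S) (hβ : β = 1) : IsOpen S := by
  cases h with
  | open_ h => exact h
  | diff => exact absurd hβ ord_one_lt_two.ne'
  | union hα => exact absurd (hβ ▸ hα) (by simpa using ord_one_lt_two.le)

lemma sl_two_inv (h : SigmaLev β S) (hβ : β = 2) :
    ∃ f g : ℕ → Set X, (∀ n, IsOpen (f n)) ∧ (∀ n, IsOpen (g n)) ∧ S = ⋃ n, f n \ g n := by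
  cases h with
  | open_ h => exact absurd hβ ord_one_lt_two.ne
  | diff f g hf hg => exact ⟨f, g, hf, hg, rfl⟩
  | union hα => exact absurd (hβ ▸ hα) (lt_irrefl _)

lemma sl_gt_two_inv (h : SigmaLev β S) (hβ : 2 < β) :
    ∃ (βs : ℕ → Ordinal) (A : ℕ → Set X), (∀ n, βs n < β) ∧
      (∀ n, SigmaLev (βs n) (A n)ᶜ) ∧ S = ⋃ n, A n := by
  cases h with
  | open_ h => exact absurd (ord_one_lt_two.trans hβ) (lt_irrefl _)
  | diff => exact absurd hβ (lt_irrefl _)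
  | union hα βs hβs A hA => exact ⟨βs, A, hβs, hA, rfl⟩

lemma sl_closed (hF : IsClosed S) : SigmaLev 2 S := by
  have h := SigmaLev.diff (X := X) (fun _ => univ) (fun _ => Sᶜ)
    (fun _ => isOpen_univ) (fun _ => hF.isOpen_compl)
  simpa [Set.iUnion_const] using h

lemma sl_open_le (hS : IsOpen S) (hβ : 1 ≤ β) : SigmaLev β S := by
  rcases lt_trichotomy β 2 with h2 | h2 | h2
  · have h1 : β = 1 := le_antisymm (ord_le_one_of_lt_two h2) hβ
    exact h1 ▸ .open_ hS
  · subst h2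
    have h := SigmaLev.diff (X := X) (fun _ => S) (fun _ => (∅ : Set X))
      (fun _ => hS) (fun _ => isOpen_empty)
    simpa [Set.iUnion_const] using h
  · have h := SigmaLev.union h2 (fun _ => 2) (fun _ => h2) (fun _ => S)
      (fun _ => sl_closed hS.isClosed_compl)
    simpa [Set.iUnion_const] using h

lemma sl_two_closed_union_open {F V : Set X} (hF : IsClosed F) (hV : IsOpen V) :
    SigmaLev 2 (F ∪ V) := by
  have h := SigmaLev.diff (fun n => if n = 0 then univ else V)
    (fun n => if n = 0 then Fᶜ else (∅ : Set X))
    (fun n => by by_cases hn : n = 0 <;> simp [hn, hV])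
    (fun n => by by_cases hn : n = 0 <;> simp [hn, hF.isOpen_compl])
  have he : (⋃ n, (if n = 0 then univ else V) \ (if n = 0 then Fᶜ else (∅ : Set X))) = F ∪ V := by
    ext x
    simp only [mem_iUnion, mem_diff, mem_union]
    constructor
    · rintro ⟨n, h1, h2⟩
      by_cases hn : n = 0 <;> simp [hn] at h1 h2 <;> tauto
    · rintro (h | h)
      exacts [⟨0, by simp, by simpa⟩, ⟨1, by simpa, by simp⟩]
  rwa [he] at h

lemma sl_mono (h : SigmaLev β S) (hle : β ≤ γ) : SigmaLev γ S := by
  rcases eq_or_lt_of_le hle with rfl | hlt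
  · exact h
  rcases lt_trichotomy γ 2 with h2 | h2 | h2
  · exact absurd ((sl_one_le h).trans_lt (hlt.trans_le (ord_le_one_of_lt_two h2)))
      (lt_irrefl _)
  · subst h2
    have h1 : β = 1 := le_antisymm (ord_le_one_of_lt_two hlt) (sl_one_le h)
    exact sl_open_le (sl_of_isOpen_one h h1) ord_one_lt_two.le
  · cases h with
    | open_ h => exact sl_open_le h (ord_one_lt_two.trans h2).le
    | diff f g hf hg =>
        refine SigmaLev.union h2 (fun _ => 2) (fun _ => h2) (fun n => f n \ g n) fun n => ?_
        have hc : (f n \ g n)ᶜ = (f n)ᶜ ∪ g n := by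
          rw [Set.diff_eq, Set.compl_inter, compl_compl]
        rw [hc]
        exact sl_two_closed_union_open (hf n).isClosed_compl (hg n)
    | union hα βs hβs A hA =>
        exact SigmaLev.union h2 βs (fun n => (hβs n).trans_le hle) A hA

lemma sl_compl_lt (hlt : β < γ) (h : SigmaLev β S) : SigmaLev γ Sᶜ := by
  rcases lt_trichotomy γ 2 with h2 | h2 | h2
  · exact absurd ((sl_one_le h).trans_lt (hlt.trans_le (ord_le_one_of_lt_two h2)))
      (lt_irrefl _)
  · subst h2
    have h1 : β = 1 := le_antisymm (ord_le_one_of_lt_two hlt) (sl_one_le h)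
    exact sl_closed (sl_of_isOpen_one h h1).isClosed_compl
  · have hu := SigmaLev.union h2 (fun _ => β) (fun _ => hlt) (fun _ => Sᶜ)
      (fun _ => by rwa [compl_compl])
    simpa [Set.iUnion_const] using hu

lemma sl_preimage {Z : Type*} [TopologicalSpace Z] {f : Z → X} (hf : Continuous f)
    (h : SigmaLev β S) : SigmaLev β (f ⁻¹' S) := by
  induction h with
  | open_ h => exact .open_ (h.preimage hf)
  | diff p q hp hq =>
      have h := SigmaLev.diff (fun n => f ⁻¹' p n) (fun n => f ⁻¹' q n)
        (fun n => (hp n).preimage hf) (fun n => (hq n).preimage hf)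
      simpa [preimage_iUnion, preimage_diff] using h
  | union hα βs hβ A hA ih =>
      have h := SigmaLev.union hα βs hβ (fun n => f ⁻¹' A n)
        (fun n => by rw [← preimage_compl]; exact ih n)
      simpa [preimage_iUnion] using h

lemma sl_iUnion {S : ℕ → Set X} (h : ∀ n, SigmaLev β (S n)) : SigmaLev β (⋃ n, S n) := by
  rcases lt_trichotomy β 2 with h2 | h2 | h2
  · have h1 : β = 1 := le_antisymm (ord_le_one_of_lt_two h2) (sl_one_le (h 0))
    exact h1 ▸ .open_ (isOpen_iUnion fun n => sl_of_isOpen_one (h n) h1)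
  · subst h2
    choose f g hf hg hS using fun n => sl_two_inv (h n) rfl
    have hd := SigmaLev.diff (fun k => f k.unpair.1 k.unpair.2) (fun k => g k.unpair.1 k.unpair.2)
      (fun k => hf _ _) (fun k => hg _ _)
    have he : (⋃ k : ℕ, f k.unpair.1 k.unpair.2 \ g k.unpair.1 k.unpair.2) = ⋃ n, S n := by
      ext x
      simp only [mem_iUnion, hS, mem_diff]
      constructor
      · rintro ⟨k, hk⟩; exact ⟨k.unpair.1, k.unpair.2, hk⟩
      · rintro ⟨n, m, hk⟩; exact ⟨Nat.pair n m, by simpa [Nat.unpair_pair] using hk⟩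
    rwa [he] at hd
  · choose βs A hβs hA hS using fun n => sl_gt_two_inv (h n) h2
    have hu := SigmaLev.union h2 (fun k => βs k.unpair.1 k.unpair.2)
      (fun k => hβs _ _) (fun k => A k.unpair.1 k.unpair.2) (fun k => hA _ _)
    have he : (⋃ k : ℕ, A k.unpair.1 k.unpair.2) = ⋃ n, S n := by
      ext x
      simp only [mem_iUnion, hS]
      constructor
      · rintro ⟨k, hk⟩; exact ⟨k.unpair.1, k.unpair.2, hk⟩
      · rintro ⟨n, m, hk⟩; exact ⟨Nat.pair n m, by simpa [Nat.unpair_pair] using hk⟩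
    rwa [he] at hu

lemma sl_union2 (hS : SigmaLev β S) (hT : SigmaLev β T) : SigmaLev β (S ∪ T) := by
  have h := sl_iUnion (β := β) (S := fun n => if n = 0 then S else T)
    (fun n => by by_cases hn : n = 0 <;> simp [hn, hS, hT])
  have he : (⋃ n, if n = 0 then S else T) = S ∪ T := by
    ext x
    simp only [mem_iUnion, mem_union]
    constructor
    · rintro ⟨n, hn⟩
      by_cases h0 : n = 0 <;> simp [h0] at hn <;> tauto
    · rintro (h | h)
      exacts [⟨0, by simp [h]⟩, ⟨1, by simp [h]⟩]
  rwa [he] at h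

lemma sl_inter_open (h : SigmaLev β S) (hV : IsOpen V) : SigmaLev β (S ∩ V) := by
  cases h with
  | open_ h => exact .open_ (h.inter hV)
  | diff f g hf hg =>
      have hd := SigmaLev.diff (fun n => f n ∩ V) g (fun n => (hf n).inter hV) hg
      have he : (⋃ n, (f n ∩ V) \ g n) = (⋃ n, f n \ g n) ∩ V := by
        ext x; simp only [mem_iUnion, mem_inter_iff, mem_diff]; tauto
      rwa [he] at hd
  | union hα βs hβ A hA =>
      have hu := SigmaLev.union hα (fun n => max (βs n) 2) (fun n => max_lt (hβ n) hα)
        (fun n => A n ∩ V) (fun n => by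
          rw [Set.compl_inter]
          exact sl_union2 (sl_mono (hA n) (le_max_left _ _))
            (sl_mono (sl_closed hV.isClosed_compl) (le_max_right _ _)))
      simpa [iUnion_inter] using hu

lemma sl_image_val {C : Set X} (hC : IsClosed C) {S : Set ↥C} (h : SigmaLev β S) :
    SigmaLev (max β 2) ((↑) '' S : Set X) := by
  induction h with
  | @open_ U hU =>
      obtain ⟨t, ht, rfl⟩ := isOpen_induced_iff.mp hU
      have h2 : (max (1 : Ordinal) 2) = 2 := max_eq_right ord_one_lt_two.le
      rw [h2, Subtype.image_preimage_coe]
      have hd := SigmaLev.diff (fun _ => t) (fun _ => Cᶜ) (fun _ => ht)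
        (fun _ => hC.isOpen_compl)
      have he : (⋃ _ : ℕ, t \ Cᶜ) = C ∩ t := by
        rw [Set.iUnion_const, diff_compl, inter_comm]
      rwa [he] at hd
  | diff f g hf hg =>
      choose t ht hft using fun n => isOpen_induced_iff.mp (hf n)
      choose s hs hgs using fun n => isOpen_induced_iff.mp (hg n)
      have h2 : (max (2 : Ordinal) 2) = 2 := max_self 2
      rw [h2, image_iUnion]
      have hd := SigmaLev.diff t (fun n => s n ∪ Cᶜ) ht
        (fun n => (hs n).union hC.isOpen_compl)
      have he : (⋃ n, t n \ (s n ∪ Cᶜ)) = ⋃ n, (↑) '' (f n \ g n) := by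
        refine iUnion_congr fun n => ?_
        rw [← hft n, ← hgs n, ← preimage_diff, Subtype.image_preimage_coe]
        ext x
        simp only [mem_inter_iff, mem_diff, mem_union, mem_compl_iff]
        tauto
      rwa [he] at hd
  | union hα βs hβ A hA ih =>
      rw [max_eq_left hα.le, image_iUnion]
      refine SigmaLev.union hα (fun n => max (βs n) 2)
        (fun n => max_lt (hβ n) hα) _ fun n => ?_
      have he : ((↑) '' A n)ᶜ = ((↑) '' (A n)ᶜ) ∪ Cᶜ := by
        ext x
        by_cases hx : x ∈ C
        · simp only [mem_union, mem_compl_iff, mem_image, Subtype.exists]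
          constructor
          · intro hni
            exact Or.inl ⟨x, hx, fun hmem => hni ⟨x, hx, hmem, rfl⟩, rfl⟩
          · rintro (⟨y, hy, hyn, rfl⟩ | hc)
            · rintro ⟨z, hz, hzn, hzx⟩
              exact hyn (by rwa [show (⟨z, hz⟩ : ↥C) = ⟨y, hy⟩ from Subtype.ext hzx] at hzn)
            · exact absurd hx hc
        · simp only [mem_union, mem_compl_iff, mem_image, Subtype.exists]
          constructor
          · intro _; exact Or.inr hx
          · rintro - ⟨z, hz, -, rfl⟩; exact hx hz
      rw [he]
      exact sl_union2 (ih n) (sl_mono (.open_ hC.isOpen_compl)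
        (ord_one_lt_two.le.trans (le_max_right _ _)))

end Basic

/-! ### Universal sets in Cantor space -/

section Cantor

/-- The basic clopen cylinder determined by a finite list of bits. -/
lemma getD_ofFn {n : ℕ} (f : Fin n → Bool) (i : ℕ) (h : i < n) :
    (List.ofFn f).getD i false = f ⟨i, h⟩ := by
  rw [List.getD_eq_getElem _ _ (by simpa using h), List.getElem_ofFn]

/-- The basic clopen cylinder determined by a finite list of bits. -/
def cylSet (s : List Bool) : Set (ℕ → Bool) := {y | ∀ i < s.length, y i = s.getD i false}

lemma isOpen_cylSet (s : List Bool) : IsOpen (cylSet s) := by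
  have he : cylSet s = ⋂ i ∈ Finset.range s.length,
      {y : ℕ → Bool | y i = s.getD i false} := by
    ext y; simp [cylSet]
  rw [he]
  refine isOpen_biInter_finset fun i _ => ?_
  have h2 : {y : ℕ → Bool | y i = s.getD i false}
      = (fun y : ℕ → Bool => y i) ⁻¹' {s.getD i false} := rfl
  rw [h2]
  exact (isOpen_discrete _).preimage (continuous_apply i)

lemma cylSet_basis {S : Set (ℕ → Bool)} (hS : IsOpen S) {y : ℕ → Bool} (hy : y ∈ S) :
    ∃ s : List Bool, y ∈ cylSet s ∧ cylSet s ⊆ S := by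
  obtain ⟨I, u, hu, hsub⟩ := isOpen_pi_iff.mp hS y hy
  set n := I.sup id + 1 with hn
  refine ⟨List.ofFn (fun i : Fin n => y i), ?_, ?_⟩
  · intro i hi
    simp only [List.length_ofFn] at hi
    rw [getD_ofFn _ _ hi]
  · intro z hz
    refine hsub ?_
    intro i hiI
    have hilt : i < n := Nat.lt_succ_of_le (Finset.le_sup (f := id) hiI)
    have := hz i (by rw [List.length_ofFn]; exact hilt)
    rw [getD_ofFn _ _ hilt] at this
    rw [this]
    exact (hu i hiI).2

/-- The `k`-th slice of a parameter, via the pairing function. -/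
def bslice (k : ℕ) (p : ℕ → Bool) : ℕ → Bool := fun i => p (Nat.pair k i)

lemma continuous_bslice (k : ℕ) : Continuous (bslice k) :=
  continuous_pi fun i => continuous_apply _

/-- The slice-on-first-coordinate map on pairs. -/
def bphi (k : ℕ) : ((ℕ → Bool) × (ℕ → Bool)) → ((ℕ → Bool) × (ℕ → Bool)) :=
  fun q => (bslice k q.1, q.2)

lemma continuous_bphi (k : ℕ) : Continuous (bphi k) :=
  ((continuous_bslice k).comp continuous_fst).prodMk continuous_snd

lemma exists_universal (α : Ordinal) (h1 : 1 ≤ α) (hω : α < ω_ 1) :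
    ∃ U : Set ((ℕ → Bool) × (ℕ → Bool)), SigmaLev α U ∧
      ∀ S : Set (ℕ → Bool), SigmaLev α S → ∃ p, S = {y | (p, y) ∈ U} := by
  induction α using Ordinal.induction with
  | h α IH =>
  classical
  rcases lt_trichotomy α 2 with hlt | rfl | hgt
  -- Case α = 1
  · have hα1 : α = 1 := le_antisymm (ord_le_one_of_lt_two hlt) h1
    subst hα1
    obtain ⟨e, he⟩ := exists_surjective_nat (List Bool)
    refine ⟨⋃ n, {q : (ℕ → Bool) × (ℕ → Bool) | q.1 n = true} ∩ {q | q.2 ∈ cylSet (e n)},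
      ?_, ?_⟩
    · refine .open_ (isOpen_iUnion fun n => IsOpen.inter ?_
        ((isOpen_cylSet (e n)).preimage continuous_snd))
      have h2 : {q : (ℕ → Bool) × (ℕ → Bool) | q.1 n = true}
          = (fun q : (ℕ → Bool) × (ℕ → Bool) => q.1 n) ⁻¹' {true} := rfl
      rw [h2]
      exact (isOpen_discrete _).preimage ((continuous_apply n).comp continuous_fst)
    · intro S hS
      have hSopen : IsOpen S := sl_of_isOpen_one hS rfl
      refine ⟨fun n => decide (cylSet (e n) ⊆ S), ?_⟩
      ext y
      simp only [Set.mem_setOf_eq, Set.mem_iUnion, Set.mem_inter_iff, decide_eq_true_iff]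
      constructor
      · intro hy
        obtain ⟨s, hys, hsub⟩ := cylSet_basis hSopen hy
        obtain ⟨n, rfl⟩ := he s
        exact ⟨n, hsub, hys⟩
      · rintro ⟨n, hsub, hyc⟩
        exact hsub hyc
  -- Case α = 2
  · obtain ⟨U1, hU1, hU1univ⟩ := IH 1 ord_one_lt_two le_rfl
      (ord_one_lt_two.trans hω)
    have hU1open : IsOpen U1 := sl_of_isOpen_one hU1 rfl
    refine ⟨⋃ n, (bphi (2 * n) ⁻¹' U1) \ (bphi (2 * n + 1) ⁻¹' U1), ?_, ?_⟩
    · exact .diff _ _ (fun n => hU1open.preimage (continuous_bphi _))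
        (fun n => hU1open.preimage (continuous_bphi _))
    · intro S hS
      obtain ⟨f, g, hf, hg, rfl⟩ := sl_two_inv hS rfl
      choose pf hpf using fun n => hU1univ (f n) (.open_ (hf n))
      choose pg hpg using fun n => hU1univ (g n) (.open_ (hg n))
      refine ⟨fun m => if m.unpair.1 % 2 = 0 then pf (m.unpair.1 / 2) m.unpair.2
        else pg (m.unpair.1 / 2) m.unpair.2, ?_⟩
      have hsl0 : ∀ n, bslice (2 * n)
          (fun m => if m.unpair.1 % 2 = 0 then pf (m.unpair.1 / 2) m.unpair.2
            else pg (m.unpair.1 / 2) m.unpair.2) = pf n := by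
        intro n; funext i
        simp [bslice, Nat.unpair_pair, Nat.mul_mod_right, Nat.mul_div_cancel_left _ two_pos]
      have hsl1 : ∀ n, bslice (2 * n + 1)
          (fun m => if m.unpair.1 % 2 = 0 then pf (m.unpair.1 / 2) m.unpair.2
            else pg (m.unpair.1 / 2) m.unpair.2) = pg n := by
        intro n; funext i
        have hmod : (2 * n + 1) % 2 = 1 := by omega
        have hdiv : (2 * n + 1) / 2 = n := by omega
        simp [bslice, Nat.unpair_pair, hmod, hdiv]
      ext y
      simp only [Set.mem_iUnion, Set.mem_setOf_eq, Set.mem_diff, Set.mem_preimage, bphi]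
      refine exists_congr fun n => ?_
      rw [hsl0 n, hsl1 n, hpf n, hpg n]
      simp [Set.mem_diff]
  -- Case 2 < α
  · -- a covering sequence of levels below α
    have hcard : α.card < Cardinal.aleph 1 := by
      rw [← Cardinal.lt_ord, Cardinal.ord_aleph]
      exact hω
    have hcount : Countable (Set.Iio α) := by
      rw [← Cardinal.mk_le_aleph0_iff, Ordinal.mk_Iio_ordinal]
      rw [← Cardinal.succ_aleph0, Order.lt_succ_iff] at hcard
      simpa using Cardinal.lift_le.mpr hcard
    have hne : Nonempty (Set.Iio α) := ⟨⟨0, zero_lt_one.trans_le h1⟩⟩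
    obtain ⟨g, hg⟩ := exists_surjective_nat (Set.Iio α)
    set f : ℕ → Ordinal := fun n => max (g n).1 1 with hf
    have hflt : ∀ n, f n < α := fun n => max_lt (g n).2 (ord_one_lt_two.trans hgt)
    have hf1 : ∀ n, 1 ≤ f n := fun n => le_max_right _ _
    have hcov : ∀ β' : Ordinal, β' < α → ∃ n, β' ≤ f n := by
      intro β' hβ'
      obtain ⟨n, hn⟩ := hg ⟨β', hβ'⟩
      exact ⟨n, by rw [hf]; simp [hn]⟩
    choose Un hUn hUnuniv using fun n =>
      IH (f n) (hflt n) (hf1 n) ((hflt n).trans hω)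
    refine ⟨⋃ j, (bphi j ⁻¹' Un j.unpair.1)ᶜ, ?_, ?_⟩
    · refine SigmaLev.union hgt (fun j => f j.unpair.1) (fun j => hflt _) _ fun j => ?_
      rw [compl_compl]
      exact sl_preimage (continuous_bphi j) (hUn _)
    · intro S hS
      obtain ⟨βs, A, hβs, hA, rfl⟩ := sl_gt_two_inv hS hgt
      choose k hk using fun n => hcov (βs n) (hβs n)
      choose q hq using fun n => hUnuniv (k n) ((A n)ᶜ) (sl_mono (hA n) (hk n))
      choose r hr using fun m =>
        hUnuniv m (Set.univ) (sl_open_le isOpen_univ (hf1 m))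
      set p : ℕ → Bool := fun m =>
        if (m.unpair.1).unpair.1 = k ((m.unpair.1).unpair.2)
          then q ((m.unpair.1).unpair.2) m.unpair.2
          else r ((m.unpair.1).unpair.1) m.unpair.2 with hp
      have hslice : ∀ j : ℕ, bslice j p =
          if j.unpair.1 = k j.unpair.2 then q j.unpair.2 else r j.unpair.1 := by
        intro j; funext i
        by_cases hj : j.unpair.1 = k j.unpair.2 <;>
          simp [bslice, hp, Nat.unpair_pair, hj]
      refine ⟨p, ?_⟩
      ext y
      simp only [Set.mem_iUnion, Set.mem_setOf_eq, Set.mem_compl_iff, Set.mem_preimage, bphi]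
      constructor
      · -- y ∈ ⋃ A n → y in the section
        rintro ⟨n, hyn⟩
        refine ⟨Nat.pair (k n) n, ?_⟩
        rw [hslice]
        simp only [Nat.unpair_pair, Prod.fst, Prod.snd, if_pos]
        intro hyU
        have : y ∈ (A n)ᶜ := by rw [hq n]; exact hyU
        exact this hyn
      · rintro ⟨j, hyj⟩
        rw [hslice] at hyj
        by_cases hj : j.unpair.1 = k j.unpair.2
        · rw [if_pos hj, hj] at hyj
          refine ⟨j.unpair.2, ?_⟩
          by_contra hyn
          have hyn' : y ∈ (A j.unpair.2)ᶜ := hyn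
          rw [hq] at hyn'
          exact hyj hyn'
        · rw [if_neg hj] at hyj
          have hy : y ∈ {y | (r j.unpair.1, y) ∈ Un j.unpair.1} := by
            rw [← hr]
            exact Set.mem_univ y
          exact (hyj hy).elim

/-- Diagonalization: a set that is `Σ⁰_α` but not `Π⁰_α` in Cantor space. -/
lemma exists_proper (α : Ordinal) (h1 : 1 ≤ α) (hω : α < ω_ 1) :
    ∃ D : Set (ℕ → Bool), SigmaLev α D ∧ ¬ SigmaLev α Dᶜ := by
  obtain ⟨U, hU, hUuniv⟩ := exists_universal α h1 hω
  refine ⟨(fun y : ℕ → Bool => (y, y)) ⁻¹' U, ?_, ?_⟩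
  · exact sl_preimage (continuous_id.prodMk continuous_id) hU
  · intro hcon
    obtain ⟨p, hp⟩ := hUuniv _ hcon
    have h := Set.ext_iff.mp hp p
    simp only [Set.mem_compl_iff, Set.mem_preimage, Set.mem_setOf_eq] at h
    tauto

end Cantor

/-! ### Nowhere dense Cantor sets inside open sets -/

section Topology
open Set Function

/-- Interleaving embedding of Cantor space into itself with nowhere dense range. -/
def interE : (ℕ → Bool) → (ℕ → Bool) := fun z n => if Even n then false else z (n / 2)

lemma interE_injective : Injective interE := by
  intro z w h
  funext m
  have h1 := congrFun h (2 * m + 1)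
  have hodd : ¬ Even (2 * m + 1) := by simp [Nat.even_add_one, Nat.even_mul]
  have hdiv : (2 * m + 1) / 2 = m := by omega
  simpa [interE, hodd, hdiv] using h1

lemma interE_continuous : Continuous interE := by
  refine continuous_pi fun n => ?_
  by_cases hn : Even n <;> simp [interE, hn]
  exacts [continuous_const, continuous_apply _]

lemma interior_range_interE : interior (Set.range interE) = ∅ := by
  by_contra hne
  obtain ⟨y, hy⟩ := Set.nonempty_iff_ne_empty.mpr hne
  obtain ⟨I, u, hu, hsub⟩ := isOpen_pi_iff.mp isOpen_interior y hy
  set m := 2 * (I.sup id + 1) with hm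
  have hmI : m ∉ I := by
    intro hmem
    have h2 : m ≤ I.sup id := by simpa using Finset.le_sup (f := id) hmem
    omega
  have hw : Function.update y m true ∈ (I : Set ℕ).pi u := by
    intro i hiI
    rw [Function.update_of_ne (by rintro rfl; exact hmI hiI)]
    exact (hu i hiI).2
  have hwr : Function.update y m true ∈ Set.range interE := interior_subset (hsub hw)
  obtain ⟨z, hz⟩ := hwr
  have := congrFun hz m
  have hme : Even m := ⟨I.sup id + 1, by omega⟩
  simp [interE, hme, Function.update_self] at this

variable {X : Type*} [MetricSpace X] [CompleteSpace X]

lemma cantor_nwd (hperfect : ∀ x : X, ¬ IsOpen ({x} : Set X))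
    {U : Set X} (hU : IsOpen U) (hne : U.Nonempty) :
    ∃ C : Set X, C ⊆ U ∧ IsClosed C ∧ interior C = ∅ ∧
      Nonempty ((ℕ → Bool) ≃ₜ ↥C) := by
  obtain ⟨x, hx⟩ := hne
  obtain ⟨r, hrpos, hrsub⟩ := Metric.nhds_basis_closedBall.mem_iff.mp (hU.mem_nhds hx)
  set W := Metric.ball x r with hW
  have hWopen : IsOpen W := Metric.isOpen_ball
  have hWne : x ∈ W := Metric.mem_ball_self hrpos
  have hpre : Preperfect W := by
    rw [preperfect_iff_nhds]
    intro z hz V hV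
    by_contra hcon
    push_neg at hcon
    have hzint : z ∈ interior V := mem_interior_iff_mem_nhds.mpr hV
    have hsub1 : interior V ∩ W ⊆ {z} := by
      intro y hy
      exact hcon y ⟨interior_subset hy.1, hy.2⟩
    have heq : ({z} : Set X) = interior V ∩ W :=
      le_antisymm (Set.singleton_subset_iff.mpr ⟨hzint, hz⟩) hsub1
    exact hperfect z (heq ▸ (isOpen_interior.inter hWopen))
  have hK : Perfect (closure W) := hpre.perfect_closure
  obtain ⟨f, hfr, hfc, hfi⟩ := hK.exists_nat_bool_injection ⟨x, subset_closure hWne⟩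
  have hfemb : Topology.IsClosedEmbedding f := hfc.isClosedEmbedding hfi
  set g : (ℕ → Bool) → X := f ∘ interE with hg
  have hgc : Continuous g := hfc.comp interE_continuous
  have hgi : Injective g := hfi.comp interE_injective
  have hgemb : Topology.IsClosedEmbedding g := hgc.isClosedEmbedding hgi
  refine ⟨Set.range g, ?_, hgemb.isClosed_range, ?_, ⟨hgemb.toIsEmbedding.toHomeomorph⟩⟩
  · intro y hy
    obtain ⟨z, rfl⟩ := hy
    exact hrsub (Metric.closure_ball_subset_closedBall (hfr ⟨interE z, rfl⟩))
  · by_contra hne'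
    obtain ⟨y, hy⟩ := Set.nonempty_iff_ne_empty.mpr hne'
    obtain ⟨w, hw⟩ : y ∈ Set.range f := by
      obtain ⟨z, rfl⟩ := interior_subset hy
      exact ⟨interE z, rfl⟩
    have hopen : IsOpen (f ⁻¹' interior (Set.range g)) :=
      isOpen_interior.preimage hfc
    have hsubE : f ⁻¹' interior (Set.range g) ⊆ Set.range interE := by
      intro z hz
      obtain ⟨z', hz'⟩ := interior_subset hz
      exact ⟨z', hfi hz'⟩
    have : (f ⁻¹' interior (Set.range g)).Nonempty := ⟨w, by rw [Set.mem_preimage, hw]; exact hy⟩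
    obtain ⟨z0, hz0⟩ := this
    have : z0 ∈ interior (Set.range interE) := interior_maximal hsubE hopen hz0
    rw [interior_range_interE] at this
    exact this
end Topology

section Family
open Set Function
variable {X : Type*} [MetricSpace X] [CompleteSpace X]

lemma dense_compl_of_list (L : List (Set X))
    (h : ∀ D ∈ L, IsClosed D ∧ interior D = ∅) : Dense (⋃ D ∈ L, D)ᶜ := by
  induction L with
  | nil => simp [dense_univ]
  | cons D L ih =>
      have h1 : Dense Dᶜ :=
        interior_eq_empty_iff_dense_compl.mp (h D List.mem_cons_self).2
      have h2 : Dense (⋃ D' ∈ L, D')ᶜ := ih fun D' hD' => h D' (List.mem_cons_of_mem _ hD')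
      have he : (⋃ D' ∈ (D :: L), (D' : Set X)) = D ∪ ⋃ D' ∈ L, D' := by
        ext x
        simp [List.mem_cons, or_and_right, exists_or]
      rw [he, Set.compl_union]
      exact h1.inter_of_isOpen_left h2 (h D List.mem_cons_self).1.isOpen_compl

lemma exists_disjoint_family (hperfect : ∀ x : X, ¬ IsOpen ({x} : Set X))
    (hX : Nonempty X) (B : ℕ → Set X) (hBo : ∀ n, IsOpen (B n)) (hBne : ∀ n, (B n).Nonempty) :
    ∃ C : ℕ → Set X, (∀ n, C n ⊆ B n) ∧ (∀ n, IsClosed (C n)) ∧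
      (∀ n, Nonempty ((ℕ → Bool) ≃ₜ ↥(C n))) ∧
      (∀ i j, i ≠ j → Disjoint (C i) (C j)) := by
  classical
  have step : ∀ L : List (Set X), ∀ n : ℕ, ∃ C : Set X, IsClosed C ∧ interior C = ∅ ∧
      Nonempty ((ℕ → Bool) ≃ₜ ↥C) ∧
      ((∀ D ∈ L, IsClosed D ∧ interior D = ∅) → (C ⊆ B n ∧ ∀ D ∈ L, Disjoint C D)) := by
    intro L n
    by_cases h : ∀ D ∈ L, IsClosed D ∧ interior D = ∅
    · set V := B n ∩ (⋃ D ∈ L, D)ᶜ with hV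
      have hVopen : IsOpen V := (hBo n).inter
        (Set.Finite.isClosed_biUnion (List.finite_toSet L) (fun D hD => (h D hD).1)).isOpen_compl
      have hVne : V.Nonempty := (dense_compl_of_list L h).inter_open_nonempty _ (hBo n) (hBne n)
      obtain ⟨C, hCV, hCcl, hCint, hChom⟩ := cantor_nwd hperfect hVopen hVne
      refine ⟨C, hCcl, hCint, hChom, fun _ => ⟨fun x hx => (hCV hx).1, ?_⟩⟩
      intro D hD
      rw [Set.disjoint_left]
      intro x hx
      have := (hCV hx).2
      simp only [Set.mem_compl_iff, Set.mem_iUnion] at this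
      exact fun hxD => this ⟨D, hD, hxD⟩
    · obtain ⟨C, hCV, hCcl, hCint, hChom⟩ :=
        cantor_nwd hperfect isOpen_univ (Set.univ_nonempty)
      exact ⟨C, hCcl, hCint, hChom, fun hL => absurd hL h⟩
  let F : ℕ → List (Set X) := fun n =>
    Nat.rec [] (fun m L => L ++ [Classical.choose (step L m)]) n
  have hFsucc : ∀ n, F (n + 1) = F n ++ [Classical.choose (step (F n) n)] := fun n => rfl
  set C : ℕ → Set X := fun n => Classical.choose (step (F n) n) with hC
  have hInv : ∀ n, ∀ D ∈ F n, IsClosed D ∧ interior D = ∅ := by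
    intro n
    induction n with
    | zero => intro D hD; simp [F] at hD
    | succ m ih =>
        intro D hD
        rw [hFsucc m, List.mem_append] at hD
        rcases hD with hD | hD
        · exact ih D hD
        · rw [List.mem_singleton] at hD
          subst hD
          obtain ⟨hc, hi, -, -⟩ := Classical.choose_spec (step (F m) m)
          exact ⟨hc, hi⟩
  have hspec : ∀ n, C n ⊆ B n ∧ ∀ D ∈ F n, Disjoint (C n) D := by
    intro n
    obtain ⟨-, -, -, hcond⟩ := Classical.choose_spec (step (F n) n)
    exact hcond (hInv n)
  have hmem : ∀ i n, i < n → C i ∈ F n := by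
    intro i n hin
    induction n with
    | zero => omega
    | succ m ih =>
        rw [hFsucc m, List.mem_append]
        rcases Nat.lt_succ_iff_lt_or_eq.mp hin with h | h
        · exact Or.inl (ih h)
        · subst h
          exact Or.inr (List.mem_singleton.mpr rfl)
  have hdisj : ∀ i j, i < j → Disjoint (C j) (C i) := by
    intro i j hij
    exact (hspec j).2 _ (hmem i j hij)
  refine ⟨C, fun n => (hspec n).1, fun n => ?_, fun n => ?_, fun i j hij => ?_⟩
  · obtain ⟨hc, -, -, -⟩ := Classical.choose_spec (step (F n) n); exact hc
  · obtain ⟨-, -, hh, -⟩ := Classical.choose_spec (step (F n) n); exact hh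
  · rcases Nat.lt_or_ge i j with h | h
    · exact (hdisj i j h).symm
    · rcases Nat.lt_or_ge j i with h' | h'
      · exact hdisj j i h'
      · omega
end Family


/-- In a perfect Polish space `X` and for `1 < α < ω₁` there is a `Σ⁰_α` set `A` such
that `A ∩ U` is `Σ⁰_α` but not `Π⁰_α` for every nonempty open `U ⊆ X`. -/
theorem exists_everywhere_proper_sigma {X : Type*} [TopologicalSpace X] [PolishSpace X]
    (hperfect : ∀ x : X, ¬ IsOpen ({x} : Set X))
    (α : Ordinal) (h1 : 1 < α) (h2 : α < ω_ 1) :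
    ∃ A : Set X, SigmaLev α A ∧ ∀ U : Set X, IsOpen U → U.Nonempty →
      SigmaLev α (A ∩ U) ∧ ¬ SigmaLev α (A ∩ U)ᶜ := by
  classical
  have h2le : (2 : Ordinal) ≤ α := by
    rw [← one_add_one_eq_two, Ordinal.add_one_eq_succ]
    exact Order.succ_le_of_lt h1
  rcases isEmpty_or_nonempty X with hX | hX
  · refine ⟨∅, sl_open_le isOpen_empty h1.le, fun U hU hUne => ?_⟩
    obtain ⟨x, -⟩ := hUne
    exact (hX.false x).elim
  letI := TopologicalSpace.upgradeIsCompletelyMetrizable X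
  -- countable basis of nonempty open sets
  obtain ⟨b, hbc, hbne, hbasis⟩ := TopologicalSpace.exists_countable_basis X
  haveI : Countable b := hbc.to_subtype
  haveI : Nonempty b := by
    obtain ⟨x⟩ := hX
    obtain ⟨s, hsb, -, -⟩ := hbasis.exists_subset_of_mem_open (Set.mem_univ x) isOpen_univ
    exact ⟨⟨s, hsb⟩⟩
  obtain ⟨Bf, hBf⟩ := exists_surjective_nat b
  set B : ℕ → Set X := fun n => (Bf n : Set X) with hB
  have hBo : ∀ n, IsOpen (B n) := fun n => hbasis.isOpen (Bf n).2
  have hBne : ∀ n, (B n).Nonempty := fun n =>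
    Set.nonempty_iff_ne_empty.mpr (fun he => hbne (he ▸ (Bf n).2))
  -- the pairwise disjoint nowhere dense Cantor sets
  obtain ⟨C, hCB, hCcl, hChom, hCdisj⟩ := exists_disjoint_family hperfect hX B hBo hBne
  -- the proper Σ⁰_α set in Cantor space
  obtain ⟨D, hD, hDc⟩ := exists_proper α h1.le h2
  set e : ∀ n, (ℕ → Bool) ≃ₜ ↥(C n) := fun n => (hChom n).some with he
  set As : ∀ n, Set ↥(C n) := fun n => (e n).symm ⁻¹' D with hAs
  have hAsl : ∀ n, SigmaLev α (As n) := fun n => sl_preimage (e n).symm.continuous hD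
  have hAc : ∀ n, ¬ SigmaLev α (As n)ᶜ := by
    intro n hcon
    have h3 := sl_preimage (e n).continuous hcon
    have h4 : (e n) ⁻¹' (As n)ᶜ = Dᶜ := by
      rw [Set.preimage_compl, hAs]
      simp only [← Set.preimage_comp, Homeomorph.symm_comp_self, Set.preimage_id]
    rw [h4] at h3
    exact hDc h3
  set A : Set X := ⋃ n, ((↑) '' As n : Set X) with hA
  have hAimg : ∀ n, SigmaLev α ((↑) '' As n : Set X) := by
    intro n
    have h3 := sl_image_val (hCcl n) (hAsl n)
    rwa [max_eq_left h2le] at h3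
  have hASL : SigmaLev α A := sl_iUnion hAimg
  refine ⟨A, hASL, fun U hU hUne => ⟨sl_inter_open hASL hU, ?_⟩⟩
  -- find a Cantor set inside U
  obtain ⟨x, hx⟩ := hUne
  obtain ⟨s, hsb, hxs, hsU⟩ := hbasis.exists_subset_of_mem_open hx hU
  obtain ⟨n, hn⟩ := hBf ⟨s, hsb⟩
  have hCU : C n ⊆ U := by
    intro z hz
    exact hsU (by rw [← show B n = s from congrArg Subtype.val hn]; exact hCB n hz)
  intro hcon
  have htr := sl_preimage (continuous_subtype_val (p := (· ∈ C n))) hcon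
  have hkey : (Subtype.val ⁻¹' (A ∩ U)ᶜ : Set ↥(C n)) = (As n)ᶜ := by
    ext z
    simp only [Set.mem_preimage, Set.mem_compl_iff, Set.mem_inter_iff, not_and]
    constructor
    · intro hz hzA
      exact hz (Set.mem_iUnion.mpr ⟨n, Set.mem_image_of_mem _ hzA⟩) (hCU z.2)
    · intro hz hzA _
      obtain ⟨m, hm⟩ := Set.mem_iUnion.mp hzA
      by_cases hmn : m = n
      · subst hmn
        obtain ⟨w, hwA, hwz⟩ := hm
        exact hz (by rwa [show w = z from Subtype.ext hwz] at hwA)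
      · obtain ⟨w, -, hwz⟩ := hm
        have hzm : (z : X) ∈ C m := hwz ▸ w.2
        exact Set.disjoint_left.mp (hCdisj m n hmn) hzm z.2
  rw [hkey] at htr
  exact hAc n htr
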